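/- For any statistical security: given a joint distribution (R, E) of a MAC key R ∈ {0,1}^{2v} and side information E, the polynomial-evaluation one-time MAC with tag length v for messages of length d satisfies: for all attackers A₁, A₂, the probability that A₂, given E and the tag of the message W = A₁(E), outputs a pair (W', T') with W' ≠ W and T' a valid tag of W', is at most ⌈d/v⌉ · 2^{v - H̃_∞(R|E)}. -/

import Mathlib

open Finset
open scoped Classical


lemma root_count {K : Type*} [Field K] [Fintype K] (P : Polynomial K) (hP : P ≠ 0) :
    (Finset.univ.filter (fun x => P.eval x = 0)).card ≤ P.natDegree := by
  classical
  calc (Finset.univ.filter (fun x => P.eval x = 0)).card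
      ≤ P.roots.toFinset.card := Finset.card_le_card (by
        intro x hx
        simp only [Finset.mem_filter] at hx
        simp [Polynomial.mem_roots, hP, Polynomial.IsRoot, hx.2])
    _ ≤ Multiset.card P.roots := Multiset.toFinset_card_le _
    _ ≤ P.natDegree := P.card_roots'

lemma card_bad {K : Type*} [Field K] [Fintype K] (t : ℕ)
    (w : Fin t → K) (A : K → (Fin t → K) × K) :
    (Finset.univ.filter (fun r : K × K =>
        (A (r.2 + ∑ i, w i * r.1 ^ ((i : ℕ) + 1))).1 ≠ w ∧
        r.2 + ∑ i, (A (r.2 + ∑ i, w i * r.1 ^ ((i : ℕ) + 1))).1 i * r.1 ^ ((i : ℕ) + 1) =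
          (A (r.2 + ∑ i, w i * r.1 ^ ((i : ℕ) + 1))).2)).card
      ≤ Fintype.card K * t := by
  classical
  set B := (Finset.univ.filter (fun r : K × K =>
        (A (r.2 + ∑ i, w i * r.1 ^ ((i : ℕ) + 1))).1 ≠ w ∧
        r.2 + ∑ i, (A (r.2 + ∑ i, w i * r.1 ^ ((i : ℕ) + 1))).1 i * r.1 ^ ((i : ℕ) + 1) =
          (A (r.2 + ∑ i, w i * r.1 ^ ((i : ℕ) + 1))).2)) with hB
  set S := (Finset.univ.filter (fun q : K × K =>
      (A q.1).1 ≠ w ∧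
      ∑ i, ((A q.1).1 i - w i) * q.2 ^ ((i : ℕ) + 1) = (A q.1).2 - q.1)) with hS
  have hBS : B.card ≤ S.card := by
    apply Finset.card_le_card_of_injOn (fun r => (r.2 + ∑ i, w i * r.1 ^ ((i : ℕ) + 1), r.1))
    · intro r hr
      simp only [hB, Finset.mem_coe, Finset.mem_filter, Finset.mem_univ, true_and] at hr
      obtain ⟨h1, h2⟩ := hr
      simp only [hS, Finset.mem_coe, Finset.mem_filter, Finset.mem_univ, true_and]
      refine ⟨h1, ?_⟩
      have e1 : ∑ i, ((A (r.2 + ∑ i, w i * r.1 ^ ((i : ℕ) + 1))).1 i - w i) * r.1 ^ ((i : ℕ) + 1)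
          = (∑ i, (A (r.2 + ∑ i, w i * r.1 ^ ((i : ℕ) + 1))).1 i * r.1 ^ ((i : ℕ) + 1))
            - ∑ i, w i * r.1 ^ ((i : ℕ) + 1) := by
        rw [← Finset.sum_sub_distrib]; congr 1; ext i; ring
      rw [e1]
      linear_combination h2
    · intro r _ r' _ h
      simp only [Prod.mk.injEq] at h
      obtain ⟨h1, h2⟩ := h
      rw [h2] at h1
      have h3 : r.2 = r'.2 := by linear_combination h1
      exact Prod.ext h2 h3
  have fiber : ∀ τ : K, (S.filter (fun q => q.1 = τ)).card ≤ t := by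
    intro τ
    by_cases hA : (A τ).1 = w
    · have : S.filter (fun q => q.1 = τ) = ∅ := by
        ext q
        simp only [hS, Finset.mem_filter, Finset.mem_univ, true_and,
          Finset.notMem_empty, iff_false]
        rintro ⟨⟨h1, h2⟩, h3⟩
        exact h1 (h3 ▸ hA)
      simp [this]
    · obtain ⟨j, hj⟩ : ∃ j, (A τ).1 j ≠ w j := by
        by_contra h
        push_neg at h
        exact hA (funext h)
      set P : Polynomial K :=
        (∑ i : Fin t, Polynomial.C ((A τ).1 i - w i) * Polynomial.X ^ ((i : ℕ) + 1))
          - Polynomial.C ((A τ).2 - τ) with hP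
      have hPne : P ≠ 0 := by
        intro h0
        have : P.coeff ((j : ℕ) + 1) = 0 := by rw [h0]; simp
        rw [hP] at this
        simp only [Polynomial.coeff_sub, Polynomial.finset_sum_coeff,
          Polynomial.coeff_C_mul, Polynomial.coeff_X_pow, Polynomial.coeff_C] at this
        rw [Finset.sum_eq_single j] at this
        · simp at this
          exact hj (sub_eq_zero.mp this)
        · intro i _ hij
          simp only [mul_ite, mul_one, mul_zero, ite_eq_right_iff]
          intro hc
          exact absurd (Fin.ext (by omega)) hij
        · simp
      have hdeg : P.natDegree ≤ t := by
        apply le_trans (Polynomial.natDegree_sub_le _ _)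
        apply max_le
        · apply Polynomial.natDegree_sum_le_of_forall_le
          intro i _
          apply le_trans (Polynomial.natDegree_mul_le)
          simp only [Polynomial.natDegree_C, Polynomial.natDegree_X_pow, zero_add]
          omega
        · simp
      calc (S.filter (fun q => q.1 = τ)).card
          ≤ (Finset.univ.filter (fun x : K => P.eval x = 0)).card := by
            apply Finset.card_le_card_of_injOn Prod.snd
            · intro q hq
              simp only [hS, Finset.mem_coe, Finset.mem_filter, Finset.mem_univ, true_and] at hq
              obtain ⟨⟨h1, h2⟩, h3⟩ := hq
              subst h3
              simp only [Finset.mem_coe, Finset.mem_filter, Finset.mem_univ, true_and, hP]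
              simp only [Polynomial.eval_sub, Polynomial.eval_finset_sum,
                Polynomial.eval_mul, Polynomial.eval_C, Polynomial.eval_pow,
                Polynomial.eval_X]
              rw [h2]; ring
            · intro q hq q' hq' h
              simp only [Finset.mem_coe, Finset.mem_filter] at hq hq'
              exact Prod.ext (hq.2.trans hq'.2.symm) h
        _ ≤ P.natDegree := root_count P hPne
        _ ≤ t := hdeg
  have hScard : S.card ≤ Fintype.card K * t := by
    calc S.card = ∑ b : K, (S.filter (fun q => q.1 = b)).card :=
          Finset.card_eq_sum_card_fiberwise (f := Prod.fst) (t := Finset.univ)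
            (fun x _ => Finset.mem_univ _)
      _ ≤ ∑ _b : K, t := Finset.sum_le_sum (fun b _ => fiber b)
      _ = Fintype.card K * t := by
          simp [Finset.sum_const, smul_eq_mul, Finset.card_univ]
  exact hBS.trans hScard

/-- The polynomial-evaluation one-time MAC with key R = (r₁, r₂) over a
field K with |K| = 2^v, MAC_R(w) = r₂ + ∑_i w_i·r₁^i for messages w ∈ K^t (t = ⌈d/v⌉),
satisfies: for any joint distribution p of the key R and side information E, and all
attackers A₁, A₂, the probability that A₂, given E and the tag of W = A₁(E), outputs
(W', T') with W' ≠ W and T' a valid tag of W', is at most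
⌈d/v⌉ · 2^{v - H̃∞(R|E)} = t · |K| · ∑_e max_r p(r,e). -/
theorem stmt_16 {K E : Type*} [Field K] [Fintype K] [Fintype E] [Nonempty E]
    (v : ℕ) (hK : Fintype.card K = 2 ^ v)
    (t : ℕ) (ht : 0 < t)
    (p : (K × K) × E → ℝ) (hp0 : ∀ z, 0 ≤ p z) (hp1 : ∑ z, p z = 1)
    (A₁ : E → (Fin t → K)) (A₂ : K × E → (Fin t → K) × K) :
    (∑ z ∈ Finset.univ.filter (fun z : (K × K) × E =>
        (A₂ (z.1.2 + ∑ i, A₁ z.2 i * z.1.1 ^ ((i : ℕ) + 1), z.2)).1 ≠ A₁ z.2 ∧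
        z.1.2 + ∑ i, (A₂ (z.1.2 + ∑ i, A₁ z.2 i * z.1.1 ^ ((i : ℕ) + 1), z.2)).1 i *
            z.1.1 ^ ((i : ℕ) + 1) =
          (A₂ (z.1.2 + ∑ i, A₁ z.2 i * z.1.1 ^ ((i : ℕ) + 1), z.2)).2), p z) ≤
      (t : ℝ) * (2 : ℝ) ^ v * ∑ e, ⨆ r : K × K, p (r, e) := by
  classical
  set P : (K × K) × E → Prop := fun z =>
        (A₂ (z.1.2 + ∑ i, A₁ z.2 i * z.1.1 ^ ((i : ℕ) + 1), z.2)).1 ≠ A₁ z.2 ∧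
        z.1.2 + ∑ i, (A₂ (z.1.2 + ∑ i, A₁ z.2 i * z.1.1 ^ ((i : ℕ) + 1), z.2)).1 i *
            z.1.1 ^ ((i : ℕ) + 1) =
          (A₂ (z.1.2 + ∑ i, A₁ z.2 i * z.1.1 ^ ((i : ℕ) + 1), z.2)).2 with hP
  set M : E → ℝ := fun e => ⨆ r : K × K, p (r, e) with hM
  have hM0 : ∀ e, 0 ≤ M e := by
    intro e
    have : p ((0, 0), e) ≤ M e :=
      le_ciSup (f := fun r : K × K => p (r, e))
        (Set.Finite.bddAbove (Set.finite_range _)) ((0 : K), (0 : K))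
    exact le_trans (hp0 _) this
  have hpM : ∀ (r : K × K) (e : E), p (r, e) ≤ M e := fun r e =>
    le_ciSup (f := fun r : K × K => p (r, e))
      (Set.Finite.bddAbove (Set.finite_range _)) r
  have key : ∀ e : E,
      (∑ r ∈ Finset.univ.filter (fun r : K × K => P (r, e)), p (r, e))
        ≤ (t : ℝ) * (2 : ℝ) ^ v * M e := by
    intro e
    have hcard : (Finset.univ.filter (fun r : K × K => P (r, e))).card
        ≤ Fintype.card K * t := card_bad t (A₁ e) (fun τ => A₂ (τ, e))
    calc (∑ r ∈ Finset.univ.filter (fun r : K × K => P (r, e)), p (r, e))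
        ≤ (Finset.univ.filter (fun r : K × K => P (r, e))).card • M e :=
          Finset.sum_le_card_nsmul _ _ _ (fun r _ => hpM r e)
      _ = ((Finset.univ.filter (fun r : K × K => P (r, e))).card : ℝ) * M e := by
          simp [nsmul_eq_mul]
      _ ≤ ((Fintype.card K * t : ℕ) : ℝ) * M e := by
          apply mul_le_mul_of_nonneg_right _ (hM0 e)
          exact_mod_cast hcard
      _ = (t : ℝ) * (2 : ℝ) ^ v * M e := by
          push_cast [hK]
          ring
  calc (∑ z ∈ Finset.univ.filter P, p z)
      = ∑ z : (K × K) × E, if P z then p z else 0 := Finset.sum_filter _ _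
    _ = ∑ e : E, ∑ r : K × K, if P (r, e) then p (r, e) else 0 := by
        rw [Fintype.sum_prod_type]
        exact Finset.sum_comm
    _ = ∑ e : E, ∑ r ∈ Finset.univ.filter (fun r : K × K => P (r, e)), p (r, e) := by
        refine Finset.sum_congr rfl (fun e _ => ?_)
        exact (Finset.sum_filter _ _).symm
    _ ≤ ∑ e : E, (t : ℝ) * (2 : ℝ) ^ v * M e := Finset.sum_le_sum (fun e _ => key e)
    _ = (t : ℝ) * (2 : ℝ) ^ v * ∑ e, M e := by rw [Finset.mul_sum]
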